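/- arXiv:2006.03135 — 4 statements merged into one kernel-verified Lean document; each statement's English description precedes it below -/
import Mathlib

section
/- Let $I_0 = [\alpha,\beta]$ be a compact interval and $\phi: I_0 \to \mathbb{R}$ be $C^2$. Then for any $r > 0$ there exists a finite partition $\mathcal{P}$ of $I_0$ into subintervals that is admissible for $\phi$ at scale $r$, i.e., every $I \in \mathcal{P}$ satisfies property $P(r)$, and for every pair of adjacent $I, J \in \mathcal{P}$ the union $I \cup J$ fails $P(r)$. -/
/-- Property `P(r)` for `φ` on the interval `[x,y]`. -/
def propP (φ : ℝ → ℝ) (x y r : ℝ) : Prop :=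
  ∀ s ∈ Set.Icc x y, ∀ c ∈ Set.Icc x y, |φ s - φ c - deriv φ c * (s - c)| ≤ 2 * r

lemma propP_mono {φ : ℝ → ℝ} {x y z r : ℝ} (h : propP φ x z r) (hyz : y ≤ z) :
    propP φ x y r := fun s hs c hc =>
  h s (Set.Icc_subset_Icc le_rfl hyz hs) c (Set.Icc_subset_Icc le_rfl hyz hc)

/-- closedness of P(r) under taking sup of right endpoints -/
lemma propP_of_forall_lt {φ : ℝ → ℝ} {x y r : ℝ} (hφ : Continuous φ) (hφ' : Continuous (deriv φ))
    (hxy : x < y) (h : ∀ z, x ≤ z → z < y → propP φ x z r) : propP φ x y r := by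
  intro s hs c hc
  by_contra hE
  push_neg at hE
  set g : ℝ → ℝ := fun u => |φ (min s u) - φ (min c u) - deriv φ (min c u) * (min s u - min c u)|
    with hg
  have hgc : Continuous g := by
    apply Continuous.abs
    fun_prop
  have hgy : 2 * r < g y := by
    have h1 : min s y = s := min_eq_left hs.2
    have h2 : min c y = c := min_eq_left hc.2
    simp only [hg, h1, h2]
    exact hE
  have hopen : IsOpen {u : ℝ | 2 * r < g u} := isOpen_lt continuous_const hgc
  have hmem : y ∈ {u : ℝ | 2 * r < g u} := hgy
  obtain ⟨ε, hε, hball⟩ := Metric.isOpen_iff.mp hopen y hmem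
  set u := max x (y - ε / 2) with hu
  have hux : x ≤ u := le_max_left _ _
  have huy : u < y := by
    rcases max_cases x (y - ε/2) with ⟨h1, _⟩ | ⟨h1, _⟩ <;> rw [hu, h1] <;> linarith
  have hub : u ∈ Metric.ball y ε := by
    rw [Metric.mem_ball, Real.dist_eq, abs_sub_lt_iff]
    constructor
    · linarith
    · rcases max_cases x (y - ε/2) with ⟨h1, h2⟩ | ⟨h1, h2⟩ <;> rw [hu, h1] <;> linarith
  have hgu : 2 * r < g u := hball hub
  have hP : propP φ x u r := h u hux huy
  have hsu : min s u ∈ Set.Icc x u := ⟨le_min hs.1 hux, min_le_right _ _⟩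
  have hcu : min c u ∈ Set.Icc x u := ⟨le_min hc.1 hux, min_le_right _ _⟩
  exact absurd (hP _ hsu _ hcu) (not_le.mpr hgu)

/-- Every `C²` function on a compact interval `[α,β]` admits an admissible partition
at any scale `r > 0`: a finite partition `α = t 0 < t 1 < ⋯ < t n = β` such that every
interval satisfies `P(r)` and every union of two adjacent intervals fails `P(r)`. -/
theorem stmt_5 (α β r : ℝ) (hαβ : α < β) (hr : 0 < r) (φ : ℝ → ℝ) (hφ : ContDiff ℝ 2 φ) :
    ∃ n : ℕ, 1 ≤ n ∧ ∃ t : ℕ → ℝ, t 0 = α ∧ t n = β ∧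
      (∀ j, j < n → t j < t (j + 1)) ∧
      (∀ j, j + 1 ≤ n → propP φ (t j) (t (j + 1)) r) ∧
      (∀ j, j + 2 ≤ n → ¬ propP φ (t j) (t (j + 2)) r) := by
  -- basic regularity
  have hφ2 : ContDiff ℝ (1 + 1 : ℕ) φ := by exact_mod_cast hφ
  have hd : Differentiable ℝ φ := hφ.differentiable (by norm_num)
  have hφ1 : ContDiff ℝ 1 (deriv φ) := by
    have := (contDiff_succ_iff_deriv (n := 1)).mp (by exact_mod_cast hφ2)
    exact this.2.2
  have hd1 : Differentiable ℝ (deriv φ) := hφ1.differentiable one_ne_zero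
  have hc1 : Continuous (deriv φ) := hd1.continuous
  have hc2 : Continuous (deriv (deriv φ)) := (contDiff_one_iff_deriv.mp hφ1).2
  -- bound on second derivative
  obtain ⟨M0, hM0⟩ := (isCompact_Icc (a := α) (b := β)).exists_bound_of_continuousOn
    hc2.continuousOn
  set M := max M0 0 with hM
  have hMnn : 0 ≤ M := le_max_right _ _
  have hM2 : ∀ x ∈ Set.Icc α β, |deriv (deriv φ) x| ≤ M := fun x hx =>
    (hM0 x hx).trans (le_max_left _ _)
  -- Taylor-type bound
  have taylor : ∀ s ∈ Set.Icc α β, ∀ c ∈ Set.Icc α β,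
      |φ s - φ c - deriv φ c * (s - c)| ≤ M * (s - c) ^ 2 := by
    intro s hs c hc
    have hsub : Set.uIcc c s ⊆ Set.Icc α β := Set.uIcc_subset_Icc hc hs
    have mvt1 : ∀ t ∈ Set.uIcc c s, |deriv φ t - deriv φ c| ≤ M * |s - c| := by
      intro t ht
      have hsub2 : Set.uIcc c t ⊆ Set.Icc α β := Set.uIcc_subset_Icc hc (hsub ht)
      have h1 : ‖deriv φ t - deriv φ c‖ ≤ M * ‖t - c‖ :=
        Convex.norm_image_sub_le_of_norm_hasDerivWithin_le
          (f := deriv φ) (f' := deriv (deriv φ)) (s := Set.uIcc c t)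
          (fun u _ => ((hd1 u).hasDerivAt).hasDerivWithinAt)
          (fun u hu => hM2 u (hsub2 hu)) (convex_uIcc _ _)
          Set.left_mem_uIcc Set.right_mem_uIcc
      calc |deriv φ t - deriv φ c| ≤ M * |t - c| := h1
        _ ≤ M * |s - c| :=
            mul_le_mul_of_nonneg_left (Set.abs_sub_left_of_mem_uIcc ht) hMnn
    have mvt2 : ‖(φ s - deriv φ c * s) - (φ c - deriv φ c * c)‖ ≤ (M * |s - c|) * ‖s - c‖ := by
      apply Convex.norm_image_sub_le_of_norm_hasDerivWithin_le
        (f := fun u => φ u - deriv φ c * u) (f' := fun u => deriv φ u - deriv φ c)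
        (s := Set.uIcc c s)
        (fun u _ => by
          exact (((hd u).hasDerivAt).sub
            ((hasDerivAt_id u).const_mul (deriv φ c))).hasDerivWithinAt.congr_deriv (by ring))
        (fun u hu => mvt1 u hu) (convex_uIcc _ _) Set.left_mem_uIcc Set.right_mem_uIcc
    calc |φ s - φ c - deriv φ c * (s - c)|
        = ‖(φ s - deriv φ c * s) - (φ c - deriv φ c * c)‖ := by
          rw [Real.norm_eq_abs]; ring_nf
      _ ≤ (M * |s - c|) * ‖s - c‖ := mvt2
      _ = M * (s - c) ^ 2 := by rw [Real.norm_eq_abs, mul_assoc, ← sq, sq_abs]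
  -- the step size δ
  set δ := Real.sqrt (2 * r / (M + 1)) with hδdef
  have hδpos : 0 < δ := Real.sqrt_pos.mpr (by positivity)
  have hδsq : M * δ ^ 2 ≤ 2 * r := by
    rw [hδdef, Real.sq_sqrt (by positivity)]
    rw [mul_div_assoc']
    rw [div_le_iff₀ (by positivity)]
    nlinarith [hr.le, hMnn]
  -- short intervals satisfy P(r)
  have small : ∀ x y, α ≤ x → x ≤ y → y ≤ β → y - x ≤ δ → propP φ x y r := by
    intro x y hax hxy hyβ hlen s hs c hc
    have hsI : s ∈ Set.Icc α β := ⟨hax.trans hs.1, hs.2.trans hyβ⟩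
    have hcI : c ∈ Set.Icc α β := ⟨hax.trans hc.1, hc.2.trans hyβ⟩
    calc |φ s - φ c - deriv φ c * (s - c)| ≤ M * (s - c) ^ 2 := taylor s hsI c hcI
      _ ≤ M * δ ^ 2 := by
          apply mul_le_mul_of_nonneg_left _ hMnn
          apply sq_le_sq'
          · have := hs.1; have := hc.2; linarith
          · have := hs.2; have := hc.1; linarith
      _ ≤ 2 * r := hδsq
  -- greedy step
  set A : ℝ → Set ℝ := fun x => {y ∈ Set.Icc x β | propP φ x y r} with hA
  set F : ℝ → ℝ := fun x => sSup (A x) with hF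
  have hmemA : ∀ x, α ≤ x → x < β → min (x + δ) β ∈ A x := by
    intro x hax hxβ
    refine ⟨⟨le_min (by linarith) hxβ.le, min_le_right _ _⟩, ?_⟩
    apply small x _ hax (le_min (by linarith) hxβ.le) (min_le_right _ _)
    rcases min_cases (x + δ) β with ⟨h1, _⟩ | ⟨h1, _⟩ <;> rw [h1] <;> linarith
  have hbdd : ∀ x, BddAbove (A x) := fun x => ⟨β, fun y hy => hy.1.2⟩
  have hFle : ∀ x, α ≤ x → x < β → F x ≤ β := fun x hax hxβ =>
    csSup_le ⟨_, hmemA x hax hxβ⟩ (fun y hy => hy.1.2)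
  have hFge : ∀ x, α ≤ x → x < β → min (x + δ) β ≤ F x := fun x hax hxβ =>
    le_csSup (hbdd x) (hmemA x hax hxβ)
  have hFgt : ∀ x, α ≤ x → x < β → x < F x := by
    intro x hax hxβ
    exact lt_of_lt_of_le (lt_min (by linarith) hxβ) (hFge x hax hxβ)
  have hFP : ∀ x, α ≤ x → x < β → propP φ x (F x) r := by
    intro x hax hxβ
    apply propP_of_forall_lt hd.continuous hc1 (hFgt x hax hxβ)
    intro z hxz hzF
    obtain ⟨w, hw, hzw⟩ := exists_lt_of_lt_csSup ⟨_, hmemA x hax hxβ⟩ hzF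
    exact propP_mono hw.2 hzw.le
  have hFmax : ∀ x, α ≤ x → x < β → ∀ z, F x < z → z ≤ β → ¬ propP φ x z r := by
    intro x hax hxβ z hFz hzβ hP
    have hxz : x ≤ z := ((hFgt x hax hxβ).trans hFz).le
    exact absurd (le_csSup (hbdd x) ⟨⟨hxz, hzβ⟩, hP⟩) (not_le.mpr hFz)
  -- the greedy sequence
  set t : ℕ → ℝ := fun j => Nat.rec α (fun _ x => if x < β then F x else β) j with ht
  have ht0 : t 0 = α := rfl
  have htsucc : ∀ j, t (j + 1) = if t j < β then F (t j) else β := fun j => rfl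
  have htmem : ∀ j, α ≤ t j ∧ t j ≤ β := by
    intro (j : ℕ)
    induction j with
    | zero => exact ⟨le_rfl, hαβ.le⟩
    | succ j ih =>
      rw [htsucc]
      split
      · exact ⟨ih.1.trans (hFgt _ ih.1 ‹_›).le, hFle _ ih.1 ‹_›⟩
      · exact ⟨hαβ.le, le_rfl⟩
  have hlow : ∀ j : ℕ, min (α + (j : ℝ) * δ) β ≤ t j := by
    intro (j : ℕ)
    induction j with
    | zero => simp [ht0]
    | succ j ih =>
      rw [htsucc]
      split
      · rename_i hjβ
        have h1 : min (α + (j + 1 : ℕ) * δ) β ≤ min (t j + δ) β := by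
          rcases min_cases (α + (j : ℕ) * δ) β with ⟨h2, _⟩ | ⟨h2, h3⟩
          · rw [h2] at ih
            apply min_le_min _ le_rfl
            push_cast
            linarith
          · rw [h2] at ih
            exact absurd ((htmem j).2.antisymm ih ▸ hjβ) (lt_irrefl β)
        exact h1.trans (hFge _ (htmem j).1 hjβ)
      · exact min_le_right _ _
  have hreach : ∃ N, t N = β := by
    refine ⟨⌈(β - α) / δ⌉₊, ?_⟩
    have h1 : (β - α) / δ ≤ (⌈(β - α) / δ⌉₊ : ℝ) := Nat.le_ceil _
    have h2 : β - α ≤ (⌈(β - α) / δ⌉₊ : ℝ) * δ := by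
      rw [div_le_iff₀ hδpos] at h1
      linarith
    have h3 : min (α + (⌈(β - α) / δ⌉₊ : ℝ) * δ) β = β := min_eq_right (by linarith)
    have := hlow ⌈(β - α) / δ⌉₊
    rw [h3] at this
    exact le_antisymm (htmem _).2 this
  set n := Nat.find hreach with hn
  have hnβ : t n = β := Nat.find_spec hreach
  have hltβ : ∀ m, m < n → t m < β := fun m hm =>
    lt_of_le_of_ne (htmem m).2 (Nat.find_min hreach hm)
  have hn1 : 1 ≤ n := by
    rcases Nat.eq_zero_or_pos n with h | h
    · rw [h, ht0] at hnβ; exact absurd hnβ hαβ.ne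
    · exact h
  refine ⟨n, hn1, t, ht0, hnβ, ?_, ?_, ?_⟩
  · intro j hj
    rw [htsucc, if_pos (hltβ j hj)]
    exact hFgt _ (htmem j).1 (hltβ j hj)
  · intro j hj
    have hjβ : t j < β := hltβ j hj
    rw [htsucc, if_pos hjβ]
    exact hFP _ (htmem j).1 hjβ
  · intro j hj
    have hjβ : t j < β := hltβ j (by omega)
    have hj1β : t (j + 1) < t (j + 2) := by
      rw [htsucc (j + 1), if_pos (hltβ (j + 1) (by omega))]
      exact hFgt _ (htmem (j + 1)).1 (hltβ (j + 1) (by omega))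
    have hFj : t (j + 1) = F (t j) := by rw [htsucc, if_pos hjβ]
    apply hFmax _ (htmem j).1 hjβ
    · rw [← hFj]; exact hj1β
    · exact (htmem (j + 2)).2
end

section
/- Let $\phi: I_0 \to \mathbb{R}$ be $C^2$ on a compact interval $I_0$, $\delta > 0$, and let $\mathcal{P}$ be a sub-admissible partition of $I_0$ for $\phi$ at scale $\delta$. Then the number of intervals in $\mathcal{P}$ is at most $|I_0| \cdot \delta^{-1/2}\|\phi''\|_\infty^{1/2} + 1$. -/
/-- The number of intervals in a sub-admissible partition of `[A,B]` for `φ` at scale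
`δ` is at most `|I₀| δ^{-1/2} ‖φ''‖_∞^{1/2} + 1`. -/
theorem stmt_7 (A B δ : ℝ) (hAB : A ≤ B) (hδ : 0 < δ) (φ : ℝ → ℝ) (hφ : ContDiff ℝ 2 φ)
    (n : ℕ) (t : ℕ → ℝ) (ht0 : t 0 = A) (htn : t n = B)
    (hmono : ∀ j, j < n → t j < t (j + 1))
    (hsubadm : ∀ j, j + 2 ≤ n →
      ¬ (∀ s ∈ Set.Icc (t j) (t (j + 2)),
          |deriv (deriv φ) s| * (t (j + 2) - t j) ^ 2 ≤ 4 * δ))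
    (M : ℝ) (hM : M = sSup ((fun s => |deriv (deriv φ) s|) '' Set.Icc A B)) :
    (n : ℝ) ≤ (B - A) * Real.sqrt M / Real.sqrt δ + 1 := by
  have hrhs0 : 0 ≤ (B - A) * Real.sqrt M / Real.sqrt δ :=
    div_nonneg (mul_nonneg (sub_nonneg.mpr hAB) (Real.sqrt_nonneg M)) (Real.sqrt_nonneg δ)
  -- monotonicity of t
  have hmono' : ∀ i j, i ≤ j → j ≤ n → t i ≤ t j := by
    intro i j hij hjn
    induction j with
    | zero => simp [Nat.le_zero.mp hij]
    | succ k ih =>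
      rcases Nat.eq_or_lt_of_le hij with h | h
      · rw [h]
      · exact le_trans (ih (Nat.lt_succ_iff.mp h) (le_trans (Nat.le_succ k) hjn))
          (le_of_lt (hmono k (Nat.lt_of_succ_le hjn)))
  have htA : ∀ j, j ≤ n → A ≤ t j := fun j hj => ht0 ▸ hmono' 0 j (Nat.zero_le j) hj
  have htB : ∀ j, j ≤ n → t j ≤ B := fun j hj => htn ▸ hmono' j n hj le_rfl
  -- continuity of second derivative, bound by M
  have h1 : ContDiff ℝ 1 (deriv φ) := by
    have h2 : (2 : WithTop ℕ∞) = 1 + 1 := by norm_num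
    exact (contDiff_succ_iff_deriv.mp (h2 ▸ hφ)).2.2
  have hcont : Continuous (deriv (deriv φ)) := h1.continuous_deriv le_rfl
  have hbdd : BddAbove ((fun s => |deriv (deriv φ) s|) '' Set.Icc A B) :=
    (isCompact_Icc.image (continuous_abs.comp hcont)).bddAbove
  have hMb : ∀ s ∈ Set.Icc A B, |deriv (deriv φ) s| ≤ M := by
    intro s hs
    rw [hM]
    exact le_csSup hbdd ⟨s, hs, rfl⟩
  -- handle small n
  rcases Nat.lt_or_ge n 2 with hn2 | hn2
  · interval_cases n <;> push_cast <;> linarith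
  obtain ⟨m, rfl⟩ : ∃ m, n = m + 2 := ⟨n - 2, by omega⟩
  -- extract the key estimate for each pair of adjacent intervals
  have key0 : ∀ j, j ≤ m → ∃ s ∈ Set.Icc (t j) (t (j + 2)),
      4 * δ < |deriv (deriv φ) s| * (t (j + 2) - t j) ^ 2 := by
    intro j hj
    have := hsubadm j (by omega)
    push_neg at this
    obtain ⟨s, hs, h⟩ := this
    exact ⟨s, hs, h⟩
  have hMpos : 0 < M := by
    obtain ⟨s, hs, h⟩ := key0 0 (Nat.zero_le m)
    have hsAB : s ∈ Set.Icc A B :=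
      ⟨le_trans (htA 0 (by omega)) hs.1, le_trans hs.2 (htB 2 (by omega))⟩
    have := hMb s hsAB
    nlinarith [sq_nonneg (t 2 - t 0), abs_nonneg (deriv (deriv φ) s)]
  have hsδ : 0 < Real.sqrt δ := Real.sqrt_pos.mpr hδ
  have hsM : 0 < Real.sqrt M := Real.sqrt_pos.mpr hMpos
  have key : ∀ j, j ≤ m → 2 * Real.sqrt δ / Real.sqrt M ≤ t (j + 2) - t j := by
    intro j hj
    obtain ⟨s, hs, h⟩ := key0 j hj
    have hsAB : s ∈ Set.Icc A B :=
      ⟨le_trans (htA j (by omega)) hs.1, le_trans hs.2 (htB (j + 2) (by omega))⟩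
    have hfs := hMb s hsAB
    set L := t (j + 2) - t j with hL
    have hLpos : 0 < L := by
      have h1 := hmono j (by omega)
      have h2 := hmono (j + 1) (by omega)
      simp only [hL]; linarith
    have hML : 4 * δ ≤ M * L ^ 2 := by
      nlinarith [sq_nonneg L, abs_nonneg (deriv (deriv φ) s)]
    have hsq : (2 * Real.sqrt δ / Real.sqrt M) ^ 2 ≤ L ^ 2 := by
      rw [div_pow, mul_pow, Real.sq_sqrt hδ.le, Real.sq_sqrt hMpos.le]
      rw [div_le_iff₀ hMpos]
      nlinarith
    have hnn : 0 ≤ 2 * Real.sqrt δ / Real.sqrt M := by positivity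
    nlinarith [hsq, hnn, hLpos]
  -- sum over pairs
  set c := 2 * Real.sqrt δ / Real.sqrt M with hc
  have hsum1 : (m + 1 : ℝ) * c ≤ ∑ j ∈ Finset.range (m + 1), (t (j + 2) - t j) := by
    calc (m + 1 : ℝ) * c = ∑ j ∈ Finset.range (m + 1), c := by
          rw [Finset.sum_const, Finset.card_range]; push_cast; ring
      _ ≤ _ := Finset.sum_le_sum fun j hj => key j (by simpa using Nat.lt_succ_iff.mp (Finset.mem_range.mp hj))
  have hsum2 : ∑ j ∈ Finset.range (m + 1), (t (j + 2) - t j)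
      = (t (m + 2) - t 1) + (t (m + 1) - t 0) := by
    have he : ∀ j, t (j + 2) - t j = (t (j + 1 + 1) - t (j + 1)) + (t (j + 1) - t j) := by
      intro j; ring_nf
    simp_rw [he]
    rw [Finset.sum_add_distrib, Finset.sum_range_sub (fun j => t (j + 1)), Finset.sum_range_sub t]
  have htop : t (m + 2) = B := htn
  have hbot : t 0 = A := ht0
  have h1A : A ≤ t 1 := htA 1 (by omega)
  have hm1B : t (m + 1) ≤ B := htB (m + 1) (by omega)
  have hfinal : (m + 1 : ℝ) * c ≤ 2 * (B - A) := by
    rw [hsum2] at hsum1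
    linarith
  -- conclude
  have hmul : (m + 1 : ℝ) * (2 * Real.sqrt δ) ≤ 2 * (B - A) * Real.sqrt M := by
    have := mul_le_mul_of_nonneg_right hfinal hsM.le
    rw [hc] at this
    calc (m + 1 : ℝ) * (2 * Real.sqrt δ)
        = (m + 1 : ℝ) * (2 * Real.sqrt δ / Real.sqrt M) * Real.sqrt M := by
          field_simp
      _ ≤ 2 * (B - A) * Real.sqrt M := this
  have : ((m : ℝ) + 1) ≤ (B - A) * Real.sqrt M / Real.sqrt δ := by
    rw [le_div_iff₀ hsδ]
    nlinarith
  push_cast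
  linarith
end

section
/- Let $0 < l_0 \le 1/4$ and let $\mathcal{P}$ be a collection of pairwise disjoint subintervals of $[0,1]$, each having length at least $l_0$ and at most $2 l_0$. Then there exists $l \in \{2^{-k} : k \in \mathbb{N}\}$ with $4 \le l/l_0 < 8$ and a decomposition $\mathcal{P} = \mathcal{U}_1 \cup \mathcal{U}_2$ such that: (1) every $I \in \mathcal{U}_1$ is contained in some dyadic interval $[(j-1)l, jl]$ with $1 \le j \le l^{-1}$, and each such dyadic interval contains fewer than 8 intervals of $\mathcal{U}_1$; (2) every $I \in \mathcal{U}_2$ is contained in some shifted interval $[(j-1/2)l, (j+1/2)l] \cap [0,1]$ with $1 \le j \le l^{-1}$, and each such shifted interval contains fewer than 8 intervals of $\mathcal{U}_2$. -/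
open MeasureTheory ENNReal in
/-- Counting lemma: pairwise disjoint intervals of length ≥ l₀ inside an interval of
length < 8 l₀ number fewer than 8. -/
theorem stmt_8_aux_card (l₀ c d : ℝ) (hl₀ : 0 < l₀) (hcd : d - c < 8 * l₀)
    (S : Finset (ℝ × ℝ))
    (hlen : ∀ p ∈ S, l₀ ≤ p.2 - p.1)
    (hsub : ∀ p ∈ S, Set.Icc p.1 p.2 ⊆ Set.Icc c d)
    (hdisj : ∀ p ∈ S, ∀ q ∈ S, p ≠ q → Disjoint (Set.Icc p.1 p.2) (Set.Icc q.1 q.2)) :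
    S.card < 8 := by
  by_contra h
  push_neg at h
  have key : (S.card : ℝ≥0∞) * ENNReal.ofReal l₀ ≤ ENNReal.ofReal (d - c) := by
    calc (S.card : ℝ≥0∞) * ENNReal.ofReal l₀ = ∑ _p ∈ S, ENNReal.ofReal l₀ := by
          simp [mul_comm]
      _ ≤ ∑ p ∈ S, volume (Set.Icc p.1 p.2) := Finset.sum_le_sum fun p hp => by
          rw [Real.volume_Icc]; exact ENNReal.ofReal_le_ofReal (hlen p hp)
      _ = volume (⋃ p ∈ S, Set.Icc p.1 p.2) :=
          (measure_biUnion_finset (fun p hp q hq hpq => hdisj p hp q hq hpq)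
            (fun p _ => measurableSet_Icc)).symm
      _ ≤ volume (Set.Icc c d) := measure_mono (by
          simp only [Set.iUnion_subset_iff]; exact hsub)
      _ = ENNReal.ofReal (d - c) := Real.volume_Icc
  have h8 : ENNReal.ofReal (8 * l₀) ≤ (S.card : ℝ≥0∞) * ENNReal.ofReal l₀ := by
    rw [ENNReal.ofReal_mul (by norm_num : (0:ℝ) ≤ 8)]
    gcongr
    · calc ENNReal.ofReal (8:ℝ) = ((8:ℕ) : ℝ≥0∞) := by norm_num
        _ ≤ (S.card : ℝ≥0∞) := by exact_mod_cast h
  have : ENNReal.ofReal (8 * l₀) ≤ ENNReal.ofReal (d - c) := h8.trans key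
  rw [ENNReal.ofReal_le_ofReal_iff'] at this
  rcases this with h' | h' <;> nlinarith

open Classical in
/-- Tiling lemma: a disjoint collection of subintervals of `[0,1]` with lengths in
`[l₀, 2l₀]` can be split into two subcollections, one fitting into dyadic intervals of
length `l ∈ 2^{-ℕ}` with `4 ≤ l/l₀ < 8`, the other into half-shifted dyadic intervals,
with fewer than 8 members of the collection in each tile. -/
theorem stmt_8 (l₀ : ℝ) (hl₀ : 0 < l₀) (hl₀' : l₀ ≤ 1/4)
    (P : Finset (ℝ × ℝ))
    (hP : ∀ p ∈ P, 0 ≤ p.1 ∧ p.2 ≤ 1 ∧ l₀ ≤ p.2 - p.1 ∧ p.2 - p.1 ≤ 2 * l₀)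
    (hdisj : ∀ p ∈ P, ∀ q ∈ P, p ≠ q → Disjoint (Set.Icc p.1 p.2) (Set.Icc q.1 q.2)) :
    ∃ k : ℕ, ∃ U₁ U₂ : Finset (ℝ × ℝ),
      (4 ≤ (2:ℝ) ^ (-(k:ℤ)) / l₀ ∧ (2:ℝ) ^ (-(k:ℤ)) / l₀ < 8) ∧
      U₁ ∪ U₂ = P ∧
      (∀ p ∈ U₁, ∃ j : ℕ, 1 ≤ j ∧ (j : ℝ) ≤ ((2:ℝ) ^ (-(k:ℤ)))⁻¹ ∧
        Set.Icc p.1 p.2 ⊆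
          Set.Icc (((j:ℝ) - 1) * (2:ℝ) ^ (-(k:ℤ))) ((j:ℝ) * (2:ℝ) ^ (-(k:ℤ)))) ∧
      (∀ j : ℕ, (U₁.filter (fun p => Set.Icc p.1 p.2 ⊆
          Set.Icc (((j:ℝ) - 1) * (2:ℝ) ^ (-(k:ℤ))) ((j:ℝ) * (2:ℝ) ^ (-(k:ℤ))))).card < 8) ∧
      (∀ p ∈ U₂, ∃ j : ℕ, 1 ≤ j ∧ (j : ℝ) ≤ ((2:ℝ) ^ (-(k:ℤ)))⁻¹ ∧
        Set.Icc p.1 p.2 ⊆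
          Set.Icc (((j:ℝ) - 1/2) * (2:ℝ) ^ (-(k:ℤ))) (((j:ℝ) + 1/2) * (2:ℝ) ^ (-(k:ℤ))) ∩
            Set.Icc 0 1) ∧
      (∀ j : ℕ, (U₂.filter (fun p => Set.Icc p.1 p.2 ⊆
          Set.Icc (((j:ℝ) - 1/2) * (2:ℝ) ^ (-(k:ℤ)))
            (((j:ℝ) + 1/2) * (2:ℝ) ^ (-(k:ℤ))))).card < 8) := by
  classical
  have h4 : (0:ℝ) < 4 * l₀ := by linarith
  have h1 : (1:ℝ) ≤ (4 * l₀)⁻¹ := by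
    rw [le_inv_comm₀ one_pos h4]; simpa using by linarith
  set N := ⌊(4 * l₀)⁻¹⌋₊ with hNdef
  have hN1 : 1 ≤ N := Nat.le_floor (by exact_mod_cast h1)
  have hNle : (N : ℝ) ≤ (4 * l₀)⁻¹ := Nat.floor_le (by positivity)
  have hNlt : (4 * l₀)⁻¹ < (N : ℝ) + 1 := Nat.lt_floor_add_one _
  set k := Nat.log 2 N with hkdef
  have hk1 : 2 ^ k ≤ N := Nat.pow_log_le_self 2 (by omega)
  have hk2 : N < 2 ^ (k + 1) := Nat.lt_pow_succ_log_self (by norm_num) N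
  set l : ℝ := (2:ℝ) ^ (-(k:ℤ)) with hldef
  have hlpow : l = ((2:ℝ) ^ k)⁻¹ := by rw [hldef, zpow_neg, zpow_natCast]
  have hpk : (0:ℝ) < (2:ℝ) ^ k := by positivity
  have hlpos : 0 < l := by rw [hlpow]; positivity
  -- 4 l₀ ≤ l
  have hge : 4 * l₀ ≤ l := by
    have h2k : (2:ℝ) ^ k ≤ (4 * l₀)⁻¹ := by
      calc (2:ℝ) ^ k = ((2 ^ k : ℕ) : ℝ) := by push_cast; ring
        _ ≤ (N : ℝ) := by exact_mod_cast hk1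
        _ ≤ (4 * l₀)⁻¹ := hNle
    rw [hlpow]
    exact (le_inv_comm₀ h4 hpk).mpr h2k
  -- l < 8 l₀
  have hlt : l < 8 * l₀ := by
    have h2k : (4 * l₀)⁻¹ < (2:ℝ) ^ (k + 1) := by
      calc (4 * l₀)⁻¹ < (N : ℝ) + 1 := hNlt
        _ ≤ ((2 ^ (k+1) : ℕ) : ℝ) := by exact_mod_cast hk2
        _ = (2:ℝ) ^ (k+1) := by push_cast; ring
    have hinv : ((2:ℝ) ^ (k+1))⁻¹ < 4 * l₀ := by
      rw [inv_lt_comm₀ (by positivity) h4]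
      exact h2k
    have : l = 2 * ((2:ℝ) ^ (k+1))⁻¹ := by
      rw [hlpow, pow_succ]; field_simp
    rw [this]; linarith
  have hlinv : l⁻¹ = (2:ℝ) ^ k := by rw [hlpow, inv_inv]
  -- predicates
  set Q : ℝ × ℝ → Prop := fun p => ∃ j : ℕ, 1 ≤ j ∧ (j : ℝ) ≤ l⁻¹ ∧
      Set.Icc p.1 p.2 ⊆ Set.Icc (((j:ℝ) - 1) * l) ((j:ℝ) * l) with hQdef
  set U₁ := P.filter Q with hU₁
  set U₂ := P.filter (fun p => ¬ Q p) with hU₂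
  -- the case analysis
  have hcases : ∀ p ∈ P, Q p ∨ ∃ j : ℕ, 1 ≤ j ∧ (j : ℝ) ≤ l⁻¹ ∧
      Set.Icc p.1 p.2 ⊆ Set.Icc (((j:ℝ) - 1/2) * l) (((j:ℝ) + 1/2) * l) := by
    intro p hp
    obtain ⟨ha, hb, hlen, hlen2⟩ := hP p hp
    have hab : p.1 < p.2 := by linarith
    have ha1 : p.1 < 1 := by linarith
    set m := ⌊p.1 / l⌋₊ with hmdef
    have hm1 : (m : ℝ) * l ≤ p.1 := by
      have := Nat.floor_le (div_nonneg ha hlpos.le)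
      calc (m : ℝ) * l ≤ (p.1 / l) * l := by
            apply mul_le_mul_of_nonneg_right this hlpos.le
        _ = p.1 := by field_simp
    have hm2 : p.1 < ((m : ℝ) + 1) * l := by
      have := Nat.lt_floor_add_one (p.1 / l)
      calc p.1 = (p.1 / l) * l := by field_simp
        _ < ((m : ℝ) + 1) * l := by
            apply mul_lt_mul_of_pos_right this hlpos
    have hmlt : m < 2 ^ k := by
      have hml : (m : ℝ) * l < 1 := lt_of_le_of_lt hm1 ha1
      have hmul : l * (2:ℝ) ^ k = 1 := by rw [hlpow]; exact inv_mul_cancel₀ hpk.ne'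
      have hcast : (m : ℝ) < ((2 ^ k : ℕ) : ℝ) := by push_cast; nlinarith
      exact_mod_cast hcast
    have hjle : ((m : ℝ) + 1) ≤ l⁻¹ := by
      rw [hlinv]
      have : (m : ℕ) + 1 ≤ 2 ^ k := hmlt
      calc (m : ℝ) + 1 = ((m + 1 : ℕ) : ℝ) := by push_cast; ring
        _ ≤ ((2 ^ k : ℕ) : ℝ) := by exact_mod_cast this
        _ = (2:ℝ) ^ k := by push_cast; ring
    by_cases hcase : p.2 ≤ ((m : ℝ) + 1) * l
    · left
      refine ⟨m + 1, Nat.le_add_left 1 m, by push_cast; exact hjle, fun x hx => ?_⟩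
      refine ⟨?_, ?_⟩
      · push_cast
        have h' : ((m:ℝ) + 1 - 1) * l = (m:ℝ) * l := by ring
        rw [h']
        linarith [hx.1, hm1]
      · push_cast
        linarith [hx.2, hcase]
    · right
      push_neg at hcase
      refine ⟨m + 1, Nat.le_add_left 1 m, by push_cast; exact hjle, fun x hx => ?_⟩
      have hhalf : 2 * l₀ ≤ l / 2 := by linarith
      constructor
      · push_cast
        have : ((m:ℝ) + 1) * l - l / 2 ≤ p.1 := by linarith [hcase, hlen2, hhalf]
        calc ((m:ℝ) + 1 - 1/2) * l = ((m:ℝ) + 1) * l - l / 2 := by ring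
          _ ≤ p.1 := this
          _ ≤ x := hx.1
      · push_cast
        have : p.2 ≤ ((m:ℝ) + 1) * l + l / 2 := by linarith [hm2, hlen2, hhalf]
        calc x ≤ p.2 := hx.2
          _ ≤ ((m:ℝ) + 1) * l + l / 2 := this
          _ = ((m:ℝ) + 1 + 1/2) * l := by ring
  refine ⟨k, U₁, U₂, ⟨?_, ?_⟩, ?_, ?_, ?_, ?_, ?_⟩
  · rw [le_div_iff₀ hl₀]; linarith
  · rw [div_lt_iff₀ hl₀]; linarith
  · rw [hU₁, hU₂]; exact Finset.filter_union_filter_not_eq Q P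
  · intro p hp
    exact (Finset.mem_filter.mp hp).2
  · intro j
    apply stmt_8_aux_card l₀ (((j:ℝ) - 1) * l) ((j:ℝ) * l) hl₀ (by ring_nf; linarith)
    · intro p hp
      have hpP : p ∈ P := Finset.mem_filter.mp ((Finset.mem_filter.mp hp).1) |>.1
      exact (hP p hpP).2.2.1
    · intro p hp
      exact (Finset.mem_filter.mp hp).2
    · intro p hp q hq hpq
      have hpP : p ∈ P := Finset.mem_filter.mp ((Finset.mem_filter.mp hp).1) |>.1
      have hqP : q ∈ P := Finset.mem_filter.mp ((Finset.mem_filter.mp hq).1) |>.1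
      exact hdisj p hpP q hqP hpq
  · intro p hp
    obtain ⟨hpP, hnQ⟩ := Finset.mem_filter.mp hp
    rcases hcases p hpP with hQp | ⟨j, hj1, hj2, hj3⟩
    · exact absurd hQp hnQ
    · obtain ⟨ha, hb, hlen, _⟩ := hP p hpP
      exact ⟨j, hj1, hj2, Set.subset_inter hj3
        (fun x hx => ⟨le_trans ha hx.1, le_trans hx.2 hb⟩)⟩
  · intro j
    apply stmt_8_aux_card l₀ (((j:ℝ) - 1/2) * l) (((j:ℝ) + 1/2) * l) hl₀ (by ring_nf; linarith)
    · intro p hp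
      have hpP : p ∈ P := Finset.mem_filter.mp ((Finset.mem_filter.mp hp).1) |>.1
      exact (hP p hpP).2.2.1
    · intro p hp
      exact (Finset.mem_filter.mp hp).2
    · intro p hp q hq hpq
      have hpP : p ∈ P := Finset.mem_filter.mp ((Finset.mem_filter.mp hp).1) |>.1
      have hqP : q ∈ P := Finset.mem_filter.mp ((Finset.mem_filter.mp hq).1) |>.1
      exact hdisj p hpP q hqP hpq
end

section
/- Let $d \ge 1$, and let $q$ be a real polynomial of degree at most $d$ whose coefficients have absolute values summing to $\lambda > 0$. Then for any $\sigma > 0$, the sublevel set $\{s \in [0,1] : |q(s)| < \sigma \lambda\}$ is a union of at most $C(d)$ intervals (relatively open in $[0,1]$), and its Lebesgue measure is at most $C(d)\, \sigma^{1/d}$, where $C(d)$ is a constant depending only on $d$. -/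
open Polynomial Finset

noncomputable def L1 (p : ℝ[X]) : ℝ := ∑ i ∈ p.support, |p.coeff i|

lemma L1_nonneg (p : ℝ[X]) : 0 ≤ L1 p :=
  Finset.sum_nonneg fun _ _ => abs_nonneg _

lemma L1_eq_sum (p : ℝ[X]) {s : Finset ℕ} (hs : p.support ⊆ s) :
    L1 p = ∑ i ∈ s, |p.coeff i| := by
  refine Finset.sum_subset hs fun i _ hi => ?_
  simp [Polynomial.notMem_support_iff.mp hi]

lemma abs_coeff_le_L1 (p : ℝ[X]) (i : ℕ) : |p.coeff i| ≤ L1 p := by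
  by_cases h : i ∈ p.support
  · exact Finset.single_le_sum (f := fun j => |p.coeff j|) (fun j _ => abs_nonneg _) h
  · simp [Polynomial.notMem_support_iff.mp h, L1_nonneg]

lemma L1_zero : L1 (0 : ℝ[X]) = 0 := by simp [L1]

lemma L1_add_le (p q : ℝ[X]) : L1 (p + q) ≤ L1 p + L1 q := by
  rw [L1_eq_sum (p + q) (Polynomial.support_add),
    L1_eq_sum p (Finset.subset_union_left (s₂ := q.support)),
    L1_eq_sum q (Finset.subset_union_right (s₁ := p.support)), ← Finset.sum_add_distrib]
  exact Finset.sum_le_sum fun i _ => by simpa using abs_add_le (p.coeff i) (q.coeff i)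

lemma L1_sum_le {ι : Type*} (s : Finset ι) (f : ι → ℝ[X]) :
    L1 (∑ i ∈ s, f i) ≤ ∑ i ∈ s, L1 (f i) := by
  classical
  induction s using Finset.induction with
  | empty => simp [L1_zero]
  | insert a s h ih =>
    rw [Finset.sum_insert h, Finset.sum_insert h]
    exact le_trans (L1_add_le _ _) (by linarith)

lemma L1_smul_le (c : ℝ) (p : ℝ[X]) : L1 (c • p) ≤ |c| * L1 p := by
  rw [L1_eq_sum (c • p) (Polynomial.support_smul c p), L1, Finset.mul_sum]
  exact Finset.sum_le_sum fun i _ => by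
    rw [Polynomial.coeff_smul, smul_eq_mul, abs_mul]

lemma L1_monomial (k : ℕ) (a : ℝ) : L1 (Polynomial.monomial k a) = |a| := by
  by_cases h : a = 0
  · simp [h, L1_zero]
  · rw [L1, Polynomial.support_monomial k h]
    simp

lemma L1_C (a : ℝ) : L1 (Polynomial.C a) = |a| := by
  rw [← Polynomial.monomial_zero_left]; exact L1_monomial 0 a

lemma L1_mul_X_le (p : ℝ[X]) : L1 (p * X) ≤ L1 p := by
  have hrw : p * X = ∑ i ∈ p.support, Polynomial.monomial (i + 1) (p.coeff i) := by
    conv_lhs => rw [p.as_sum_support]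
    rw [Finset.sum_mul]
    exact Finset.sum_congr rfl fun i _ => Polynomial.monomial_mul_X i (p.coeff i)
  rw [hrw]
  refine le_trans (L1_sum_le _ _) (le_of_eq ?_)
  exact Finset.sum_congr rfl fun i _ => L1_monomial (i + 1) (p.coeff i)

lemma L1_mul_linear_le (p : ℝ[X]) (c m : ℝ) :
    L1 (p * (Polynomial.C c + Polynomial.C m * X)) ≤ L1 p * (|c| + |m|) := by
  have hrw : p * (Polynomial.C c + Polynomial.C m * X) = c • p + m • (p * X) := by
    simp only [Polynomial.smul_eq_C_mul]; ring
  rw [hrw]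
  have h1 := L1_add_le (c • p) (m • (p * X))
  have h2 := L1_smul_le c p
  have h3 := L1_smul_le m (p * X)
  have h4 := L1_mul_X_le p
  have h5 := abs_nonneg m
  nlinarith [L1_nonneg p]

lemma L1_pow_linear_le (c m : ℝ) (j : ℕ) :
    L1 ((Polynomial.C c + Polynomial.C m * X) ^ j) ≤ (|c| + |m|) ^ j := by
  induction j with
  | zero =>
    have : ((Polynomial.C c + Polynomial.C m * X) ^ 0 : ℝ[X]) = Polynomial.C 1 := by simp
    rw [this, L1_C]; simp
  | succ j ih =>
    rw [pow_succ, pow_succ]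
    refine le_trans (L1_mul_linear_le _ c m) ?_
    have : (0:ℝ) ≤ |c| + |m| := by positivity
    nlinarith [L1_nonneg ((Polynomial.C c + Polynomial.C m * X) ^ j)]

lemma L1_comp_linear_le (P : ℝ[X]) (c m : ℝ) (d : ℕ) (hP : P.natDegree ≤ d)
    (h1 : 1 ≤ |c| + |m|) :
    L1 (P.comp (Polynomial.C c + Polynomial.C m * X)) ≤ (|c| + |m|) ^ d * L1 P := by
  rw [Polynomial.comp_eq_sum_left, Polynomial.sum]
  refine le_trans (L1_sum_le _ _) ?_
  rw [L1, Finset.mul_sum]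
  refine Finset.sum_le_sum fun j hj => ?_
  have hsmul : Polynomial.C (P.coeff j) * (Polynomial.C c + Polynomial.C m * X) ^ j
      = P.coeff j • ((Polynomial.C c + Polynomial.C m * X) ^ j) := by
    rw [Polynomial.smul_eq_C_mul]
  rw [hsmul]
  refine le_trans (L1_smul_le _ _) ?_
  have h2 : (|c| + |m|) ^ j ≤ (|c| + |m|) ^ d :=
    pow_le_pow_right₀ h1 (le_trans (Polynomial.le_natDegree_of_mem_supp j hj) hP)
  have := L1_pow_linear_le c m j
  rw [mul_comm ((|c| + |m|) ^ d) _]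
  exact mul_le_mul_of_nonneg_left (le_trans this h2) (abs_nonneg _)

noncomputable def lagD (d : ℕ) : ℝ :=
  ∑ i ∈ Finset.range (d + 1),
    L1 (Lagrange.basis (Finset.range (d + 1)) (fun i : ℕ => (i : ℝ) / d) i)

lemma lagD_nonneg (d : ℕ) : 0 ≤ lagD d :=
  Finset.sum_nonneg fun _ _ => L1_nonneg _

lemma nodes_injOn (d : ℕ) (hd : 1 ≤ d) :
    Set.InjOn (fun i : ℕ => (i : ℝ) / d) (Finset.range (d + 1)) := by
  intro i _ j _ hij
  have hdne : (d : ℝ) ≠ 0 := by positivity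
  have : (i : ℝ) = j := by
    field_simp at hij; exact_mod_cast hij
  exact_mod_cast this

lemma lagrange_L1_bound (d : ℕ) (hd : 1 ≤ d) (Q : ℝ[X]) (hQ : Q.natDegree ≤ d)
    (M : ℝ) (hM : 0 ≤ M) (h : ∀ i ∈ Finset.range (d + 1), |Q.eval ((i : ℝ) / d)| ≤ M) :
    L1 Q ≤ lagD d * M := by
  have hdeg : Q.degree < (Finset.range (d + 1)).card := by
    rw [Finset.card_range]
    exact lt_of_le_of_lt Q.degree_le_natDegree (by exact_mod_cast Nat.lt_succ_of_le hQ)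
  have hrep := Lagrange.eq_interpolate (nodes_injOn d hd) hdeg
  calc L1 Q = L1 (Lagrange.interpolate (Finset.range (d + 1)) (fun i : ℕ => (i : ℝ) / d)
      fun i => Q.eval ((i : ℝ) / d)) := by rw [← hrep]
    _ ≤ ∑ i ∈ Finset.range (d + 1), L1 (Polynomial.C (Q.eval ((i : ℝ) / d)) *
        Lagrange.basis (Finset.range (d + 1)) (fun i : ℕ => (i : ℝ) / d) i) := by
      rw [Lagrange.interpolate_apply]; exact L1_sum_le _ _
    _ ≤ ∑ i ∈ Finset.range (d + 1), M *
        L1 (Lagrange.basis (Finset.range (d + 1)) (fun i : ℕ => (i : ℝ) / d) i) := by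
      refine Finset.sum_le_sum fun i hi => ?_
      rw [← Polynomial.smul_eq_C_mul]
      refine le_trans (L1_smul_le _ _) ?_
      exact mul_le_mul_of_nonneg_right (h i hi) (L1_nonneg _)
    _ = lagD d * M := by rw [← Finset.mul_sum, mul_comm, lagD]

set_option maxHeartbeats 1000000 in
lemma length_bound (d : ℕ) (hd : 1 ≤ d) (q : ℝ[X]) (hq : q.natDegree ≤ d)
    (a b : ℝ) (ha : 0 ≤ a) (hab : a ≤ b) (hb : b ≤ 1) (σ : ℝ) (hσ : 0 ≤ σ)
    (hval : ∀ s ∈ Set.Icc a b, |q.eval s| ≤ σ * L1 q) (hL : 0 < L1 q) :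
    b - a ≤ (2 * max (lagD d) 1) * σ ^ ((1:ℝ)/(d:ℝ)) := by
  set D : ℝ := max (lagD d) 1 with hDdef
  have hD1 : 1 ≤ D := le_max_right _ _
  have hdR : (0:ℝ) < d := by exact_mod_cast hd
  have hσp : 0 ≤ σ ^ ((1:ℝ)/(d:ℝ)) := Real.rpow_nonneg hσ _
  rcases eq_or_lt_of_le hab with rfl | hlt
  · have : (0:ℝ) ≤ 2 * D * σ ^ ((1:ℝ)/(d:ℝ)) :=
      mul_nonneg (by linarith) hσp
    linarith
  set ℓ : ℝ := b - a with hℓdef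
  have hℓpos : 0 < ℓ := by simp [hℓdef]; linarith
  have hℓ1 : ℓ ≤ 1 := by simp [hℓdef]; linarith
  have hℓne : ℓ ≠ 0 := ne_of_gt hℓpos
  set Q : ℝ[X] := q.comp (Polynomial.C a + Polynomial.C ℓ * X) with hQdef
  have hQdeg : Q.natDegree ≤ d := by
    refine le_trans (Polynomial.natDegree_comp_le) ?_
    have h1 : (Polynomial.C a + Polynomial.C ℓ * X : ℝ[X]).natDegree ≤ 1 := by
      refine le_trans (Polynomial.natDegree_add_le _ _) ?_
      simp only [Polynomial.natDegree_C, max_le_iff]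
      exact ⟨Nat.zero_le 1, le_trans (Polynomial.natDegree_C_mul_le _ _)
        Polynomial.natDegree_X_le⟩
    calc q.natDegree * (Polynomial.C a + Polynomial.C ℓ * X : ℝ[X]).natDegree
        ≤ d * 1 := Nat.mul_le_mul hq h1
      _ = d := by ring
  -- values of Q at nodes
  have hQval : ∀ i ∈ Finset.range (d + 1), |Q.eval ((i : ℝ) / d)| ≤ σ * L1 q := by
    intro i hi
    have hi' : (i : ℝ) ≤ d := by
      have : i ≤ d := Nat.lt_succ_iff.mp (Finset.mem_range.mp hi)
      exact_mod_cast this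
    have hx0 : 0 ≤ (i : ℝ) / d := by positivity
    have hx1 : (i : ℝ) / d ≤ 1 := by rw [div_le_one hdR]; exact hi'
    have heval : Q.eval ((i : ℝ) / d) = q.eval (a + ℓ * ((i : ℝ) / d)) := by
      simp [hQdef, Polynomial.eval_comp]
    rw [heval]
    refine hval _ ⟨by nlinarith, by nlinarith⟩
  have hQL1 : L1 Q ≤ D * (σ * L1 q) := by
    refine le_trans (lagrange_L1_bound d hd Q hQdeg (σ * L1 q)
      (mul_nonneg hσ (le_of_lt hL)) hQval) ?_
    exact mul_le_mul_of_nonneg_right (le_max_left _ _) (mul_nonneg hσ (le_of_lt hL))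
  -- recover q from Q
  have hcompX : (Polynomial.C a + Polynomial.C ℓ * X : ℝ[X]).comp
      (Polynomial.C (-(a/ℓ)) + Polynomial.C ℓ⁻¹ * X) = X := by
    simp only [Polynomial.add_comp, Polynomial.mul_comp, Polynomial.C_comp, Polynomial.X_comp]
    rw [mul_add, ← Polynomial.C_mul, ← mul_assoc, ← Polynomial.C_mul]
    have e1 : ℓ * -(a/ℓ) = -a := by field_simp
    have e2 : ℓ * ℓ⁻¹ = 1 := mul_inv_cancel₀ hℓne
    rw [e1, e2, Polynomial.C_1, one_mul, ← add_assoc, ← Polynomial.C_add, add_neg_cancel,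
      Polynomial.C_0, zero_add]
  have hq_eq : q = Q.comp (Polynomial.C (-(a/ℓ)) + Polynomial.C ℓ⁻¹ * X) := by
    rw [hQdef, Polynomial.comp_assoc, hcompX, Polynomial.comp_X]
  set K : ℝ := |(-(a/ℓ))| + |ℓ⁻¹| with hKdef
  have hK_eq : K = a/ℓ + ℓ⁻¹ := by
    rw [hKdef, abs_neg, abs_of_nonneg (by positivity), abs_of_nonneg (by positivity)]
  have hinv1 : 1 ≤ ℓ⁻¹ := by
    nlinarith [mul_inv_cancel₀ hℓne, inv_pos.mpr hℓpos]
  have hK1 : 1 ≤ K := by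
    rw [hK_eq]
    have : 0 ≤ a / ℓ := by positivity
    linarith
  have hK2 : K ≤ 2 / ℓ := by
    rw [hK_eq, div_add' _ _ _ hℓne, div_le_div_iff₀ hℓpos hℓpos]
    have : ℓ⁻¹ * ℓ = 1 := inv_mul_cancel₀ hℓne
    nlinarith
  have hqL1 : L1 q ≤ K ^ d * L1 Q := by
    conv_lhs => rw [hq_eq]
    exact L1_comp_linear_le Q (-(a/ℓ)) ℓ⁻¹ d hQdeg hK1
  have hKd : K ^ d ≤ (2 / ℓ) ^ d :=
    pow_le_pow_left₀ (le_trans zero_le_one hK1) hK2 d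
  have hchain : L1 q ≤ (2 / ℓ) ^ d * (D * (σ * L1 q)) := by
    calc L1 q ≤ K ^ d * L1 Q := hqL1
      _ ≤ (2 / ℓ) ^ d * (D * (σ * L1 q)) := by
        refine mul_le_mul hKd hQL1 (L1_nonneg _) ?_
        positivity
  have hℓd : ℓ ^ d ≤ 2 ^ d * D * σ := by
    have hpow : 0 < ℓ ^ d := pow_pos hℓpos d
    have h1 : L1 q * ℓ ^ d ≤ 2 ^ d * (D * (σ * L1 q)) := by
      have := mul_le_mul_of_nonneg_right hchain (le_of_lt hpow)
      calc L1 q * ℓ ^ d ≤ (2 / ℓ) ^ d * (D * (σ * L1 q)) * ℓ ^ d := this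
        _ = 2 ^ d * (D * (σ * L1 q)) := by
          rw [div_pow]
          field_simp
    nlinarith [hL]
  -- take d-th roots
  have hdinv : (d : ℝ) * ((1:ℝ)/(d:ℝ)) = 1 := by field_simp
  have hroot : ℓ = (ℓ ^ d) ^ ((1:ℝ)/(d:ℝ)) := by
    rw [← Real.rpow_natCast ℓ d, ← Real.rpow_mul (le_of_lt hℓpos), hdinv, Real.rpow_one]
  have hmono : (ℓ ^ d) ^ ((1:ℝ)/(d:ℝ)) ≤ (2 ^ d * D * σ) ^ ((1:ℝ)/(d:ℝ)) :=
    Real.rpow_le_rpow (le_of_lt (pow_pos hℓpos d)) hℓd (by positivity)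
  have hsplit : ((2:ℝ) ^ d * D * σ) ^ ((1:ℝ)/(d:ℝ))
      = ((2:ℝ) ^ d) ^ ((1:ℝ)/(d:ℝ)) * D ^ ((1:ℝ)/(d:ℝ)) * σ ^ ((1:ℝ)/(d:ℝ)) := by
    rw [Real.mul_rpow (by positivity) hσ, Real.mul_rpow (by positivity) (by positivity)]
  have h2d : ((2:ℝ) ^ d) ^ ((1:ℝ)/(d:ℝ)) = 2 := by
    rw [← Real.rpow_natCast (2:ℝ) d, ← Real.rpow_mul (by norm_num), hdinv, Real.rpow_one]
  have hDroot : D ^ ((1:ℝ)/(d:ℝ)) ≤ D := by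
    have h1d : (1:ℝ)/(d:ℝ) ≤ 1 := by
      rw [div_le_one hdR]; exact_mod_cast hd
    calc D ^ ((1:ℝ)/(d:ℝ)) ≤ D ^ (1:ℝ) := Real.rpow_le_rpow_of_exponent_le hD1 h1d
      _ = D := Real.rpow_one D
  calc b - a = ℓ := rfl
    _ = (ℓ ^ d) ^ ((1:ℝ)/(d:ℝ)) := hroot
    _ ≤ (2 ^ d * D * σ) ^ ((1:ℝ)/(d:ℝ)) := hmono
    _ = 2 * D ^ ((1:ℝ)/(d:ℝ)) * σ ^ ((1:ℝ)/(d:ℝ)) := by rw [hsplit, h2d]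
    _ ≤ 2 * D * σ ^ ((1:ℝ)/(d:ℝ)) := by
      refine mul_le_mul_of_nonneg_right ?_ hσp
      nlinarith

open MeasureTheory in
set_option maxHeartbeats 2000000 in
/-- Sublevel set estimate: for a real polynomial `q` of degree at most `d` whose
coefficients' absolute values sum to `λ > 0`, and any `σ > 0`, the set
`{s ∈ [0,1] : |q(s)| < σλ}` is a union of at most `C(d)` relatively open subintervals
of `[0,1]`, of total measure at most `C(d) σ^{1/d}`. -/
theorem stmt_13 (d : ℕ) (hd : 1 ≤ d) :
    ∃ C : ℝ, 0 < C ∧ ∀ q : Polynomial ℝ, q.natDegree ≤ d →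
      ∀ lam : ℝ, lam = ∑ i ∈ Finset.range (d + 1), |q.coeff i| → 0 < lam →
      ∀ σ : ℝ, 0 < σ →
        (∃ n : ℕ, (n : ℝ) ≤ C ∧ ∃ S : Fin n → Set ℝ,
          (∀ i, ∃ a b : ℝ, S i = Set.Ioo a b ∩ Set.Icc 0 1) ∧
          {s ∈ Set.Icc (0:ℝ) 1 | |q.eval s| < σ * lam} = ⋃ i, S i) ∧
        volume {s ∈ Set.Icc (0:ℝ) 1 | |q.eval s| < σ * lam} ≤
          ENNReal.ofReal (C * σ ^ ((1:ℝ)/(d:ℝ))) := by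
  classical
  set E : ℝ := 2 * max (lagD d) 1 with hEdef
  have hE1 : 1 ≤ E := by
    have := le_max_right (lagD d) 1; rw [hEdef]; linarith
  set N : ℕ := (2 * d + 2) ^ 2 with hNdef
  have hN1 : 1 ≤ N := Nat.one_le_iff_ne_zero.mpr (pow_ne_zero _ (by omega))
  refine ⟨(N : ℝ) * E, by positivity, ?_⟩
  intro q hq lam hlam hlampos σ hσ
  have hsupp : q.support ⊆ Finset.range (d + 1) := by
    intro i hi
    exact Finset.mem_range.mpr (Nat.lt_succ_of_le
      (le_trans (Polynomial.le_natDegree_of_mem_supp i hi) hq))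
  have hL1 : L1 q = lam := by rw [hlam]; exact L1_eq_sum q hsupp
  set U := {s ∈ Set.Icc (0:ℝ) 1 | |q.eval s| < σ * lam} with hUdef
  set p : ℝ[X] := q * q - Polynomial.C ((σ * lam) ^ 2) with hpdef
  have hslpos : 0 < σ * lam := mul_pos hσ hlampos
  have hpeval : ∀ s, p.eval s = (q.eval s) ^ 2 - (σ * lam) ^ 2 := by
    intro s; simp [hpdef]; ring
  have hmem : ∀ s : ℝ, |q.eval s| < σ * lam ↔ p.eval s < 0 := by
    intro s
    rw [hpeval, sub_neg]
    constructor
    · intro h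
      have h0 := abs_nonneg (q.eval s)
      nlinarith [sq_abs (q.eval s)]
    · intro h
      nlinarith [sq_abs (q.eval s), abs_nonneg (q.eval s)]
  set T : Finset ℝ := p.roots.toFinset ∪ {-1, 2} with hTdef
  have hTcard : T.card ≤ 2 * d + 2 := by
    have h1 : p.roots.toFinset.card ≤ Multiset.card p.roots := p.roots.toFinset_card_le
    have h2 := Polynomial.card_roots' p
    have h3 : p.natDegree ≤ 2 * d := by
      refine le_trans (Polynomial.natDegree_sub_le _ _) ?_
      rw [Polynomial.natDegree_C]
      simp only [max_le_iff]
      exact ⟨le_trans (Polynomial.natDegree_mul_le) (by omega), Nat.zero_le _⟩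
    have h4 : ({-1, 2} : Finset ℝ).card ≤ 2 := by
      rw [Finset.card_insert_of_notMem (by norm_num), Finset.card_singleton]
    have h5 := Finset.card_union_le p.roots.toFinset ({-1, 2} : Finset ℝ)
    rw [hTdef]; omega
  set F : Finset (ℝ × ℝ) :=
    (T ×ˢ T).filter (fun ab => Set.Ioo ab.1 ab.2 ∩ Set.Icc 0 1 ⊆ U) with hFdef
  set n : ℕ := F.card with hndef
  have hnN : n ≤ N := by
    calc n ≤ (T ×ˢ T).card := Finset.card_filter_le _ _
      _ = T.card * T.card := Finset.card_product _ _
      _ ≤ (2 * d + 2) * (2 * d + 2) := Nat.mul_le_mul hTcard hTcard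
      _ = N := by rw [hNdef, pow_two]
  set e : { x // x ∈ F } ≃ Fin n := F.equivFin with hedef
  set S : Fin n → Set ℝ :=
    fun i => Set.Ioo ((e.symm i : ℝ × ℝ).1) ((e.symm i : ℝ × ℝ).2) ∩ Set.Icc 0 1 with hSdef
  -- each interval in F is contained in U
  have hFsub : ∀ ab ∈ F, Set.Ioo (Prod.fst ab) (Prod.snd ab) ∩ Set.Icc 0 1 ⊆ U :=
    fun ab hab => (Finset.mem_filter.mp hab).2
  have hUnion : U = ⋃ i, S i := by
    apply Set.Subset.antisymm
    · intro s hs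
      obtain ⟨hsIcc, hsval⟩ := hs
      have hsp : p.eval s < 0 := (hmem s).mp hsval
      have hp0 : p ≠ 0 := by
        intro h; rw [h] at hsp; simp at hsp
      have hsT : s ∉ T := by
        intro hsT
        rw [hTdef, Finset.mem_union] at hsT
        rcases hsT with h | h
        · have := (Polynomial.mem_roots hp0).mp (Multiset.mem_toFinset.mp h)
          rw [Polynomial.IsRoot] at this
          linarith
        · simp only [Finset.mem_insert, Finset.mem_singleton] at h
          rcases h with rfl | rfl
          · linarith [hsIcc.1]
          · linarith [hsIcc.2]
      have hA : (T.filter (· < s)).Nonempty := by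
        refine ⟨-1, Finset.mem_filter.mpr ⟨?_, by linarith [hsIcc.1]⟩⟩
        rw [hTdef, Finset.mem_union]; right; simp
      have hB : (T.filter (s < ·)).Nonempty := by
        refine ⟨2, Finset.mem_filter.mpr ⟨?_, by linarith [hsIcc.2]⟩⟩
        rw [hTdef, Finset.mem_union]; right; simp
      set a : ℝ := (T.filter (· < s)).max' hA with hadef
      set b : ℝ := (T.filter (s < ·)).min' hB with hbdef
      have haT : a ∈ T := (Finset.mem_filter.mp ((T.filter (· < s)).max'_mem hA)).1
      have hbT : b ∈ T := (Finset.mem_filter.mp ((T.filter (s < ·)).min'_mem hB)).1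
      have has : a < s := by
        exact (Finset.mem_filter.mp ((T.filter (· < s)).max'_mem hA)).2
      have hsb : s < b := by
        exact (Finset.mem_filter.mp ((T.filter (s < ·)).min'_mem hB)).2
      have hamax : ∀ t ∈ T, t < s → t ≤ a := by
        intro t ht hts
        exact Finset.le_max' (T.filter (· < s)) t (Finset.mem_filter.mpr ⟨ht, hts⟩)
      have hbmin : ∀ t ∈ T, s < t → b ≤ t := by
        intro t ht hts
        exact Finset.min'_le (T.filter (s < ·)) t (Finset.mem_filter.mpr ⟨ht, hts⟩)
      -- the interval (a,b) ∩ [0,1] is inside U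
      have hkey : Set.Ioo a b ∩ Set.Icc 0 1 ⊆ U := by
        rintro t ⟨htIoo, htIcc⟩
        refine ⟨htIcc, (hmem t).mpr ?_⟩
        by_contra hcon
        push_neg at hcon
        have hcont : ContinuousOn (fun x => p.eval x) (Set.univ : Set ℝ) :=
          (Polynomial.continuous p).continuousOn
        have hroot : ∃ r, r ∈ Set.Ioo a b ∧ p.eval r = 0 := by
          rcases le_or_gt s t with hst | hst
          · have hIic := intermediate_value_Icc hst
              ((Polynomial.continuous p).continuousOn)
            have h0mem : (0:ℝ) ∈ Set.Icc (p.eval s) (p.eval t) := ⟨le_of_lt hsp, hcon⟩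
            obtain ⟨r, hrmem, hr0⟩ := hIic h0mem
            exact ⟨r, ⟨lt_of_lt_of_le has hrmem.1, lt_of_le_of_lt hrmem.2 htIoo.2⟩, hr0⟩
          · have hIic := intermediate_value_Icc' (le_of_lt hst)
              ((Polynomial.continuous p).continuousOn)
            have h0mem : (0:ℝ) ∈ Set.Icc (p.eval s) (p.eval t) := ⟨le_of_lt hsp, hcon⟩
            obtain ⟨r, hrmem, hr0⟩ := hIic h0mem
            exact ⟨r, ⟨lt_of_lt_of_le htIoo.1 hrmem.1, lt_of_le_of_lt hrmem.2 hsb⟩, hr0⟩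
        obtain ⟨r, hrIoo, hr0⟩ := hroot
        have hrT : r ∈ T := by
          rw [hTdef, Finset.mem_union]; left
          exact Multiset.mem_toFinset.mpr ((Polynomial.mem_roots hp0).mpr hr0)
        have hrs : r ≠ s := by intro h; rw [h] at hr0; linarith
        rcases lt_or_gt_of_ne hrs with h | h
        · have := hamax r hrT h; linarith [hrIoo.1]
        · have := hbmin r hrT h; linarith [hrIoo.2]
      have habF : (a, b) ∈ F := by
        rw [hFdef, Finset.mem_filter]
        exact ⟨Finset.mem_product.mpr ⟨haT, hbT⟩, hkey⟩
      refine Set.mem_iUnion.mpr ⟨e ⟨(a, b), habF⟩, ?_⟩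
      rw [hSdef]
      simp only [Equiv.symm_apply_apply]
      exact ⟨⟨has, hsb⟩, hsIcc⟩
    · intro s hs
      obtain ⟨i, hi⟩ := Set.mem_iUnion.mp hs
      exact hFsub _ (e.symm i).2 hi
  constructor
  · refine ⟨n, ?_, S, fun i => ⟨_, _, rfl⟩, hUnion⟩
    have h1 : (n : ℝ) ≤ (N : ℝ) := by exact_mod_cast hnN
    have h2 : (0:ℝ) ≤ N := by positivity
    nlinarith
  -- measure bound
  · have hσp : 0 ≤ σ ^ ((1:ℝ)/(d:ℝ)) := Real.rpow_nonneg (le_of_lt hσ) _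
    have hvol : ∀ i, volume (S i) ≤ ENNReal.ofReal (E * σ ^ ((1:ℝ)/(d:ℝ))) := by
      intro i
      set a : ℝ := (e.symm i : ℝ × ℝ).1 with hadef
      set b : ℝ := (e.symm i : ℝ × ℝ).2 with hbdef
      have hsubU : Set.Ioo a b ∩ Set.Icc 0 1 ⊆ U := hFsub _ (e.symm i).2
      set a' : ℝ := max a 0 with ha'def
      set b' : ℝ := min b 1 with hb'def
      have hsub2 : S i ⊆ Set.Icc a' b' := by
        rintro t ⟨h1, h2⟩
        exact ⟨max_le (le_of_lt h1.1) h2.1, le_min (le_of_lt h1.2) h2.2⟩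
      refine le_trans (measure_mono hsub2) ?_
      rw [Real.volume_Icc]
      rcases le_or_gt b' a' with hba | hab'
      · refine le_trans (le_of_eq ?_) zero_le
        rw [ENNReal.ofReal_eq_zero]; linarith
      · refine ENNReal.ofReal_le_ofReal ?_
        have hIoosub : Set.Ioo a' b' ⊆ Set.Ioo a b ∩ Set.Icc 0 1 := by
          rintro t ⟨h1, h2⟩
          exact ⟨⟨lt_of_le_of_lt (le_max_left a 0) h1, lt_of_lt_of_le h2 (min_le_left b 1)⟩,
            ⟨le_of_lt (lt_of_le_of_lt (le_max_right a 0) h1),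
             le_of_lt (lt_of_lt_of_le h2 (min_le_right b 1))⟩⟩
        have hclosed : IsClosed {x : ℝ | |q.eval x| ≤ σ * lam} :=
          isClosed_le ((Polynomial.continuous q).abs) continuous_const
        have hsubC : Set.Icc a' b' ⊆ {x : ℝ | |q.eval x| ≤ σ * lam} := by
          rw [← closure_Ioo (ne_of_lt hab')]
          refine closure_minimal ?_ hclosed
          intro x hx
          exact le_of_lt (hIoosub hx |> hsubU).2
        have hvals : ∀ x ∈ Set.Icc a' b', |q.eval x| ≤ σ * L1 q := by
          intro x hx; rw [hL1]; exact hsubC hx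
        exact length_bound d hd q hq a' b' (le_max_right a 0)
          (le_of_lt hab') (min_le_right b 1) σ (le_of_lt hσ) hvals
          (by rw [hL1]; exact hlampos)
    calc volume U ≤ ∑ i, volume (S i) := by
          rw [hUnion]; exact measure_iUnion_fintype_le volume S
      _ ≤ ∑ j : Fin n, ENNReal.ofReal (E * σ ^ ((1:ℝ)/(d:ℝ))) :=
          Finset.sum_le_sum fun i _ => hvol i
      _ = (n : ENNReal) * ENNReal.ofReal (E * σ ^ ((1:ℝ)/(d:ℝ))) := by
          rw [Finset.sum_const, Finset.card_univ, Fintype.card_fin, nsmul_eq_mul]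
      _ ≤ (N : ENNReal) * ENNReal.ofReal (E * σ ^ ((1:ℝ)/(d:ℝ))) := by
          exact mul_le_mul_left (by exact_mod_cast hnN) _
      _ = ENNReal.ofReal ((N : ℝ) * E * σ ^ ((1:ℝ)/(d:ℝ))) := by
          rw [← ENNReal.ofReal_natCast N, ← ENNReal.ofReal_mul (by positivity)]
          congr 1
          rw [hEdef]; ring
end
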